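/- Let e be a Hermite–Biehler function and define e₁(z) := (z + i)·e(z). Then e₁ is a Hermite–Biehler function, and an entire function h is associated to B(e) if and only if h belongs to the de Branges space B(e₁); that is, assoc B(e) = B((z+i)e). -/

import Mathlib

open MeasureTheory Complex

noncomputable section

/-- `f#(z) := conj (f (conj z))`. -/
def fsharp (f : ℂ → ℂ) : ℂ → ℂ := fun z => (starRingEnd ℂ) (f ((starRingEnd ℂ) z))

/-- Hermite–Biehler function: entire with `|e(conj z)| < |e z|` on the upper half-plane. -/
def IsHB (e : ℂ → ℂ) : Prop :=
  Differentiable ℂ e ∧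
  ∀ z : ℂ, 0 < z.im → ‖e ((starRingEnd ℂ) z)‖ < ‖e z‖

/-- Membership in the de Branges space `B(e)`. -/
def MemDB (e f : ℂ → ℂ) : Prop :=
  Differentiable ℂ f ∧
  Integrable (fun x : ℝ => ‖f x / e x‖ ^ 2) ∧
  ∃ c : ℝ, 0 ≤ c ∧ ∀ z : ℂ, 0 < z.im →
    ‖f z / e z‖ ≤ c / Real.sqrt z.im ∧
    ‖fsharp f z / e z‖ ≤ c / Real.sqrt z.im

/-- Squared norm in `B(e)`: `∫ |f(x)|² |e(x)|⁻² dx`. -/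
def dBnormSq (e f : ℂ → ℂ) : ℝ :=
  ∫ x : ℝ, ‖f x‖ ^ 2 / ‖e x‖ ^ 2

/-- Inner product in `B(e)`: `∫ conj (f x) * g x * |e x|⁻² dx`. -/
def dBinner (e f g : ℂ → ℂ) : ℂ :=
  ∫ x : ℝ, (starRingEnd ℂ) (f x) * g x / ((‖e x‖ : ℝ) : ℂ) ^ 2

/-- The reproducing kernel of `B(e)`. -/
def dBkernel (e : ℂ → ℂ) (z w : ℂ) : ℂ :=
  if z = (starRingEnd ℂ) w then
    (deriv (fsharp e) z * e z - deriv e z * fsharp e z) / (2 * Real.pi * Complex.I)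
  else
    (fsharp e z * e ((starRingEnd ℂ) w) - e z * fsharp e ((starRingEnd ℂ) w)) /
      (2 * Real.pi * Complex.I * (z - (starRingEnd ℂ) w))

/-- `s_β(z) := (i/2) (e^{iβ} e(z) − e^{−iβ} e#(z))`. -/
def sfun (e : ℂ → ℂ) (β : ℝ) (z : ℂ) : ℂ :=
  Complex.I / 2 *
    (Complex.exp (Complex.I * β) * e z - Complex.exp (-(Complex.I * β)) * fsharp e z)

end

/-- `h` is associated to `B(e)`: for every `f ∈ B(e)` and `w` with `f w ≠ 0`, the entire
function `z ↦ (f(z)h(w) − f(w)h(z))/(z − w)` (extended across the removable singularity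
at `w`) belongs to `B(e)`. -/
def AssocCond (e h : ℂ → ℂ) : Prop :=
  ∀ (f : ℂ → ℂ) (w : ℂ), MemDB e f → f w ≠ 0 →
    ∃ g : ℂ → ℂ, (∀ z : ℂ, z ≠ w → g z = (f z * h w - f w * h z) / (z - w)) ∧ MemDB e g

section Aux

lemma aux_hasDerivAt_fsharp {f : ℂ → ℂ} {c z : ℂ}
    (hf : HasDerivAt f c ((starRingEnd ℂ) z)) :
    HasDerivAt (fsharp f) ((starRingEnd ℂ) c) z := by
  rw [hasDerivAt_iff_tendsto_slope] at hf ⊢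
  have hconj : Filter.Tendsto (fun y : ℂ => (starRingEnd ℂ) y) (nhdsWithin z {z}ᶜ)
      (nhdsWithin ((starRingEnd ℂ) z) {(starRingEnd ℂ) z}ᶜ) := by
    apply tendsto_nhdsWithin_of_tendsto_nhds_of_eventually_within
    · exact ((Complex.continuous_conj.tendsto z).mono_left nhdsWithin_le_nhds)
    · filter_upwards [self_mem_nhdsWithin] with y hy
      simpa using fun h => hy ((starRingEnd ℂ).injective h)
  have := ((Complex.continuous_conj.tendsto c).comp (hf.comp hconj))
  apply this.congr'
  filter_upwards [self_mem_nhdsWithin] with y hy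
  simp only [Function.comp_apply, slope_def_field, fsharp]
  rw [map_div₀, map_sub, map_sub, Complex.conj_conj, Complex.conj_conj]

lemma aux_fsharp_differentiable {f : ℂ → ℂ} (hf : Differentiable ℂ f) :
    Differentiable ℂ (fsharp f) := fun z =>
  (aux_hasDerivAt_fsharp (hf _).hasDerivAt).differentiableAt

lemma aux_differentiable_dslope {f : ℂ → ℂ} (hf : Differentiable ℂ f) (a : ℂ) :
    Differentiable ℂ (dslope f a) := by
  intro b
  rcases eq_or_ne b a with rfl | hb
  · obtain ⟨p, hp⟩ := hf.analyticAt b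
    exact (hp.has_fpower_series_dslope_fslope).analyticAt.differentiableAt
  · exact (differentiableAt_dslope_of_ne hb).2 (hf b)

lemma aux_norm_fsharp_real (f : ℂ → ℂ) (x : ℝ) : ‖fsharp f x‖ = ‖f x‖ := by
  simp [fsharp, Complex.conj_ofReal]

lemma aux_hb_pos {e : ℂ → ℂ} (he : IsHB e) {z : ℂ} (hz : 0 < z.im) : 0 < ‖e z‖ := by
  have h := he.2 z hz
  have h0 : (0:ℝ) ≤ ‖e ((starRingEnd ℂ) z)‖ := norm_nonneg _
  linarith

lemma aux_hb_ne {e : ℂ → ℂ} (he : IsHB e) {z : ℂ} (hz : 0 < z.im) : e z ≠ 0 :=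
  norm_pos_iff.1 (aux_hb_pos he hz)

lemma aux_hb_fsharp_le {e : ℂ → ℂ} (he : IsHB e) {z : ℂ} (hz : 0 < z.im) :
    ‖fsharp e z‖ ≤ ‖e z‖ := by
  have := (he.2 z hz).le
  simp only [fsharp] at this ⊢
  simpa using this

lemma aux_aesm {f e : ℂ → ℂ} (hf : Continuous f) (he : Continuous e) :
    AEStronglyMeasurable (fun x : ℝ => ‖f x / e x‖ ^ 2) volume := by
  have m : Measurable fun x : ℝ => f x / e x :=
    ((hf.comp Complex.continuous_ofReal).measurable).div
      ((he.comp Complex.continuous_ofReal).measurable)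
  have : (fun x : ℝ => ‖f x / e x‖ ^ 2) = fun x : ℝ => ‖f (x:ℂ) / e (x:ℂ)‖ ^ 2 := by
    funext x; rfl
  rw [this]
  exact (m.norm.pow_const 2).aestronglyMeasurable

lemma aux_ext {F G : ℂ → ℂ} (hF : Continuous F) (hG : Continuous G) (w : ℂ)
    (h : ∀ z : ℂ, z ≠ w → F z = G z) (z : ℂ) : F z = G z := by
  have hd : Dense ({w}ᶜ : Set ℂ) := dense_compl_singleton w
  exact congrFun (hF.ext_on hd hG (fun y hy => h y hy)) z

lemma aux_two_sqrt {t : ℝ} (ht : 0 ≤ t) : 2 * Real.sqrt t ≤ t + 1 := by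
  nlinarith [Real.sq_sqrt ht, Real.sqrt_nonneg t, sq_nonneg (Real.sqrt t - 1)]

lemma aux_sqrt_le_3 {t d : ℝ} (ht : 0 < t) (hd : 1/2 ≤ d) (htd : t ≤ d + 1) :
    Real.sqrt t ≤ 3 * d := by
  nlinarith [Real.sq_sqrt ht.le, Real.sqrt_nonneg t, sq_nonneg (Real.sqrt t - 3*d)]

lemma aux_im_add_one_le (z : ℂ) : z.im + 1 ≤ ‖z + Complex.I‖ := by
  have := Complex.im_le_norm (z + Complex.I)
  simpa using this

lemma aux_one_le_norm_add_I {z : ℂ} (hz : 0 ≤ z.im) : 1 ≤ ‖z + Complex.I‖ := by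
  have := aux_im_add_one_le z; linarith

lemma aux_sq_norm_real_add_I (x : ℝ) : ‖(x:ℂ) + Complex.I‖ ^ 2 = x ^ 2 + 1 := by
  rw [Complex.sq_norm]
  simp [Complex.normSq_apply]
  ring

end Aux

section Kernel

lemma aux_kernel {e : ℂ → ℂ} (he : IsHB e) : ∃ f : ℂ → ℂ, MemDB e f ∧ f Complex.I ≠ 0 := by
  classical
  set A := e (-Complex.I) with hA
  set B := fsharp e (-Complex.I) with hB
  set ψ : ℂ → ℂ := fun z => fsharp e z * A - e z * B with hψ
  have hψdiff : Differentiable ℂ ψ :=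
    ((aux_fsharp_differentiable he.1).mul_const A).sub (he.1.mul_const B)
  have hψI : ψ (-Complex.I) = 0 := by
    simp only [hψ, ← hA, ← hB]; ring
  set f : ℂ → ℂ := dslope ψ (-Complex.I) with hf
  have hfd : Differentiable ℂ f := aux_differentiable_dslope hψdiff _
  have hfeq : ∀ z : ℂ, z ≠ -Complex.I → f z = ψ z / (z + Complex.I) := by
    intro z hz
    rw [hf, dslope_of_ne _ hz, slope_def_field, hψI, sub_zero, sub_neg_eq_add]
  set C := ‖A‖ + ‖B‖ with hC
  have hC0 : (0:ℝ) ≤ C := by positivity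
  have hψb : ∀ z : ℂ, ‖fsharp e z‖ ≤ ‖e z‖ → ‖ψ z‖ ≤ C * ‖e z‖ := by
    intro z hle
    calc ‖ψ z‖ ≤ ‖fsharp e z * A‖ + ‖e z * B‖ := norm_sub_le _ _
      _ = ‖fsharp e z‖ * ‖A‖ + ‖e z‖ * ‖B‖ := by rw [norm_mul, norm_mul]
      _ ≤ ‖e z‖ * ‖A‖ + ‖e z‖ * ‖B‖ := by
          have := norm_nonneg A
          gcongr
      _ = C * ‖e z‖ := by rw [hC]; ring
  -- value at I
  have hfI : f Complex.I ≠ 0 := by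
    have hIne : Complex.I ≠ -Complex.I := by
      intro hc
      have h2 := congrArg Complex.im hc
      simp at h2
      norm_num at h2
    have h1 : f Complex.I = ψ Complex.I / (Complex.I + Complex.I) := hfeq _ hIne
    have hψIval : ψ Complex.I
        = ((Complex.normSq A : ℂ) - (Complex.normSq (e Complex.I) : ℂ)) := by
      have e1 : fsharp e Complex.I = (starRingEnd ℂ) A := by
        simp only [fsharp, Complex.conj_I, ← hA]
      have e2 : B = (starRingEnd ℂ) (e Complex.I) := by
        simp only [hB, fsharp, map_neg, Complex.conj_I, neg_neg]
      simp only [hψ, e1, e2]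
      rw [mul_comm ((starRingEnd ℂ) A) A, Complex.mul_conj, Complex.mul_conj]
    have hlt : Complex.normSq A < Complex.normSq (e Complex.I) := by
      have h2 := he.2 Complex.I (by simp)
      rw [Complex.conj_I, ← hA] at h2
      rw [Complex.normSq_eq_norm_sq, Complex.normSq_eq_norm_sq]
      have h0 : (0:ℝ) ≤ ‖A‖ := norm_nonneg _
      nlinarith
    rw [h1, hψIval]
    apply div_ne_zero
    · rw [← Complex.ofReal_sub]
      exact Complex.ofReal_ne_zero.2 (by linarith)
    · intro hc
      have := congrArg Complex.im hc; simp at this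
  -- real-axis bound
  have hfR : ∀ x : ℝ, ‖f (x:ℂ) / e (x:ℂ)‖ ^ 2 ≤ C^2 * ((1:ℝ)+x^2)⁻¹ := by
    intro x
    have hxne : (x:ℂ) ≠ -Complex.I := by
      intro hc
      have := congrArg Complex.im hc; simp at this
    have hx1 : (1:ℝ) ≤ ‖(x:ℂ) + Complex.I‖ := aux_one_le_norm_add_I (by simp)
    have hb : ‖f (x:ℂ) / e (x:ℂ)‖ ≤ C / ‖(x:ℂ) + Complex.I‖ := by
      rcases eq_or_ne (e (x:ℂ)) 0 with h0 | h0
      · rw [h0, div_zero, norm_zero]; positivity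
      · have hez : (0:ℝ) < ‖e (x:ℂ)‖ := norm_pos_iff.2 h0
        rw [hfeq _ hxne, div_div, norm_div, norm_mul]
        rw [div_le_div_iff₀ (by positivity) (by linarith)]
        have hb2 : ‖ψ (x:ℂ)‖ ≤ C * ‖e (x:ℂ)‖ :=
          hψb _ (by rw [aux_norm_fsharp_real])
        calc ‖ψ (x:ℂ)‖ * ‖(x:ℂ) + Complex.I‖
            ≤ (C * ‖e (x:ℂ)‖) * ‖(x:ℂ) + Complex.I‖ := by gcongr
          _ = C * (‖(x:ℂ) + Complex.I‖ * ‖e (x:ℂ)‖) := by ring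
    have : ‖f (x:ℂ) / e (x:ℂ)‖ ^ 2 ≤ (C / ‖(x:ℂ) + Complex.I‖)^2 := by
      exact pow_le_pow_left₀ (norm_nonneg _) hb 2
    refine this.trans ?_
    rw [div_pow, aux_sq_norm_real_add_I]
    rw [div_eq_mul_inv, add_comm (x^2) 1]
  have hint : Integrable (fun x : ℝ => ‖f (x:ℂ) / e (x:ℂ)‖ ^ 2) := by
    apply Integrable.mono' ((integrable_inv_one_add_sq).const_mul (C^2))
      (aux_aesm hfd.continuous he.1.continuous)
    refine Filter.Eventually.of_forall (fun x => ?_)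
    rw [Real.norm_of_nonneg (by positivity)]
    exact hfR x
  -- upper half-plane bound for f itself
  have hfU : ∀ z : ℂ, 0 < z.im →
      ‖f z / e z‖ ≤ (C/2) / Real.sqrt z.im := by
    intro z hz
    have hzne : z ≠ -Complex.I := by
      intro hc; rw [hc] at hz
      simp only [Complex.neg_im, Complex.I_im] at hz; linarith
    have hez : (0:ℝ) < ‖e z‖ := aux_hb_pos he hz
    have hs : (0:ℝ) < Real.sqrt z.im := Real.sqrt_pos.2 hz
    have hzI : (0:ℝ) < ‖z + Complex.I‖ := by
      have := aux_im_add_one_le z; linarith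
    rw [hfeq _ hzne, div_div, norm_div, norm_mul]
    rw [div_le_div_iff₀ (by positivity) hs]
    have hb2 : ‖ψ z‖ ≤ C * ‖e z‖ := hψb _ (aux_hb_fsharp_le he hz)
    calc ‖ψ z‖ * Real.sqrt z.im
        ≤ (C * ‖e z‖) * Real.sqrt z.im :=
          mul_le_mul_of_nonneg_right hb2 (Real.sqrt_nonneg _)
      _ ≤ (C * ‖e z‖) * ((z.im + 1)/2) :=
          mul_le_mul_of_nonneg_left (by linarith [aux_two_sqrt hz.le])
            (mul_nonneg hC0 (norm_nonneg _))
      _ ≤ (C * ‖e z‖) * (‖z + Complex.I‖/2) :=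
          mul_le_mul_of_nonneg_left (by linarith [aux_im_add_one_le z])
            (mul_nonneg hC0 (norm_nonneg _))
      _ = C/2 * (‖z + Complex.I‖ * ‖e z‖) := by ring
  -- formula for fsharp f away from I
  set χ : ℂ → ℂ := fun z => e z * (starRingEnd ℂ) A - fsharp e z * (starRingEnd ℂ) B with hχ
  have hfs_eq : ∀ z : ℂ, z ≠ Complex.I → fsharp f z = χ z / (z - Complex.I) := by
    intro z hz
    have hzc : (starRingEnd ℂ) z ≠ -Complex.I := by
      intro hc
      apply hz
      have h2 := congrArg (starRingEnd ℂ) hc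
      rwa [Complex.conj_conj, map_neg, Complex.conj_I, neg_neg] at h2
    have h0 : fsharp f z = (starRingEnd ℂ) (f ((starRingEnd ℂ) z)) := rfl
    rw [h0, hfeq _ hzc, map_div₀]
    congr 1
    · simp only [hψ, map_sub, map_mul]
      have e1 : (starRingEnd ℂ) (fsharp e ((starRingEnd ℂ) z)) = e z := by
        simp [fsharp]
      have e2 : (starRingEnd ℂ) (e ((starRingEnd ℂ) z)) = fsharp e z := rfl
      rw [e1, e2, hχ]
    · rw [map_add, Complex.conj_conj, Complex.conj_I]
      ring
  have hχb : ∀ z : ℂ, 0 < z.im → ‖χ z‖ ≤ C * ‖e z‖ := by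
    intro z hz
    have hχ1 : ‖(starRingEnd ℂ) A‖ = ‖A‖ := by
      simp
    have hχ2 : ‖(starRingEnd ℂ) B‖ = ‖B‖ := by
      simp
    calc ‖χ z‖ ≤ ‖e z * (starRingEnd ℂ) A‖ + ‖fsharp e z * (starRingEnd ℂ) B‖ :=
          norm_sub_le _ _
      _ = ‖e z‖ * ‖A‖ + ‖fsharp e z‖ * ‖B‖ := by rw [norm_mul, norm_mul, hχ1, hχ2]
      _ ≤ ‖e z‖ * ‖A‖ + ‖e z‖ * ‖B‖ := by
          have h3 := aux_hb_fsharp_le he hz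
          have h4 := norm_nonneg B
          nlinarith
      _ = C * ‖e z‖ := by rw [hC]; ring
  -- compactness constants near I
  obtain ⟨x₀, hx₀mem, hx₀min⟩ :=
    (isCompact_closedBall Complex.I (1/2)).exists_isMinOn
      ⟨Complex.I, Metric.mem_closedBall_self (by norm_num)⟩
      (he.1.continuous.norm.continuousOn)
  have hball_im : ∀ y : ℂ, y ∈ Metric.closedBall Complex.I (1/2) → (1:ℝ)/2 ≤ y.im := by
    intro y hy
    have h1 : ‖y - Complex.I‖ ≤ 1/2 := by
      rw [← dist_eq_norm]; exact Metric.mem_closedBall.1 hy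
    have h2 : |(y - Complex.I).im| ≤ ‖y - Complex.I‖ := Complex.abs_im_le_norm _
    have h3 : (y - Complex.I).im = y.im - 1 := by simp
    rw [h3] at h2
    have h4 := abs_le.1 (h2.trans h1)
    linarith [h4.1]
  have hm_pos : (0:ℝ) < ‖e x₀‖ :=
    aux_hb_pos he (lt_of_lt_of_le (by norm_num) (hball_im x₀ hx₀mem))
  obtain ⟨M₂, hM₂⟩ :=
    (isCompact_closedBall Complex.I (1/2)).exists_bound_of_continuousOn
      ((aux_fsharp_differentiable hfd).continuous.continuousOn)
  have hM₂0 : (0:ℝ) ≤ M₂ :=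
    le_trans (norm_nonneg _) (hM₂ Complex.I (Metric.mem_closedBall_self (by norm_num)))
  set cf := C/2 + 3*C + 2*M₂/‖e x₀‖ with hcf
  have hcf0 : 0 ≤ cf := by positivity
  -- fsharp f upper half-plane bound
  have hfsU : ∀ z : ℂ, 0 < z.im →
      ‖fsharp f z / e z‖ ≤ cf / Real.sqrt z.im := by
    intro z hz
    have hez : (0:ℝ) < ‖e z‖ := aux_hb_pos he hz
    have hs : (0:ℝ) < Real.sqrt z.im := Real.sqrt_pos.2 hz
    rcases le_or_gt (1/2 : ℝ) ‖z - Complex.I‖ with hd | hd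
    · have hzne : z ≠ Complex.I := by
        intro hc; rw [hc] at hd; simp at hd; linarith
      have hd0 : (0:ℝ) < ‖z - Complex.I‖ := by linarith
      have htd : z.im ≤ ‖z - Complex.I‖ + 1 := by
        have h2 : (z - Complex.I).im ≤ ‖z - Complex.I‖ :=
          Complex.im_le_norm _
        have h3 : (z - Complex.I).im = z.im - 1 := by simp
        linarith [h3 ▸ h2]
      have hsq : Real.sqrt z.im ≤ 3 * ‖z - Complex.I‖ := aux_sqrt_le_3 hz hd htd
      have hstep : ‖fsharp f z / e z‖ ≤ 3*C / Real.sqrt z.im := by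
        rw [hfs_eq _ hzne, div_div, norm_div, norm_mul]
        rw [div_le_div_iff₀ (by positivity) hs]
        calc ‖χ z‖ * Real.sqrt z.im
            ≤ (C * ‖e z‖) * Real.sqrt z.im :=
              mul_le_mul_of_nonneg_right (hχb z hz) (Real.sqrt_nonneg _)
          _ ≤ (C * ‖e z‖) * (3 * ‖z - Complex.I‖) :=
              mul_le_mul_of_nonneg_left hsq (mul_nonneg hC0 (norm_nonneg _))
          _ = 3*C * (‖z - Complex.I‖ * ‖e z‖) := by ring
      refine hstep.trans ?_
      apply div_le_div_of_nonneg_right ?_ (Real.sqrt_nonneg _)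
      rw [hcf]
      have : (0:ℝ) ≤ 2*M₂/‖e x₀‖ := by positivity
      linarith
    · have hmem : z ∈ Metric.closedBall Complex.I (1/2) := by
        rw [Metric.mem_closedBall, dist_eq_norm]
        linarith
      have hm_le : ‖e x₀‖ ≤ ‖e z‖ := hx₀min hmem
      have hMz : ‖fsharp f z‖ ≤ M₂ := hM₂ z hmem
      have him : z.im ≤ 3/2 := by
        have h2 : |(z - Complex.I).im| ≤ ‖z - Complex.I‖ := by
          exact Complex.abs_im_le_norm _
        have h3 : (z - Complex.I).im = z.im - 1 := by simp
        rw [h3] at h2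
        have h4 := (abs_le.1 h2).2
        linarith
      have hsqle : Real.sqrt z.im ≤ 2 := by
        have h1 : Real.sqrt z.im ≤ Real.sqrt 4 :=
          Real.sqrt_le_sqrt (by linarith)
        have h2 : Real.sqrt 4 = 2 := by
          rw [show (4:ℝ) = 2^2 by norm_num, Real.sqrt_sq (by norm_num : (0:ℝ) ≤ 2)]
        linarith
      have hstep : ‖fsharp f z / e z‖ ≤ (2*M₂/‖e x₀‖) / Real.sqrt z.im := by
        rw [norm_div]
        rw [div_le_div_iff₀ hez hs]
        calc ‖fsharp f z‖ * Real.sqrt z.im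
            ≤ M₂ * 2 := by
              apply mul_le_mul hMz hsqle (Real.sqrt_nonneg _) hM₂0
          _ = 2*M₂ := by ring
          _ ≤ 2*M₂/‖e x₀‖ * ‖e z‖ := by
              rw [div_mul_eq_mul_div, le_div_iff₀ hm_pos]
              have := mul_le_mul_of_nonneg_left hm_le (by positivity : (0:ℝ) ≤ 2*M₂)
              nlinarith
      refine hstep.trans ?_
      apply div_le_div_of_nonneg_right ?_ (Real.sqrt_nonneg _)
      rw [hcf]
      have h5 : (0:ℝ) ≤ C/2 := by positivity
      have h6 : (0:ℝ) ≤ 3*C := by positivity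
      linarith
  refine ⟨f, ⟨hfd, hint, cf, hcf0, fun z hz => ⟨?_, hfsU z hz⟩⟩, hfI⟩
  refine (hfU z hz).trans ?_
  apply div_le_div_of_nonneg_right ?_ (Real.sqrt_nonneg _)
  rw [hcf]
  have h5 : (0:ℝ) ≤ 3*C := by positivity
  have h6 : (0:ℝ) ≤ 2*M₂/‖e x₀‖ := by positivity
  linarith

end Kernel

section PartA

lemma aux_isHB_e1 {e : ℂ → ℂ} (he : IsHB e) :
    IsHB (fun z => (z + Complex.I) * e z) := by
  constructor
  · exact (differentiable_id.add_const Complex.I).mul he.1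
  · intro z hz
    have h1 : ‖(starRingEnd ℂ) z + Complex.I‖ < ‖z + Complex.I‖ := by
      rw [Complex.norm_def, Complex.norm_def]
      apply Real.sqrt_lt_sqrt (Complex.normSq_nonneg _)
      simp only [Complex.normSq_apply, Complex.add_re, Complex.add_im, Complex.conj_re,
        Complex.conj_im, Complex.I_re, Complex.I_im]
      nlinarith
    have h2 := he.2 z hz
    simp only [norm_mul]
    exact mul_lt_mul'' h1 h2 (norm_nonneg _) (norm_nonneg _)

end PartA

section Main

section Forward

lemma aux_forward {e h : ℂ → ℂ} (he : IsHB e) (hh : Differentiable ℂ h)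
    (ha : AssocCond e h) : MemDB (fun z => (z + Complex.I) * e z) h := by
  obtain ⟨f, hfmem, hfI⟩ := aux_kernel he
  obtain ⟨g, hgeq, hgmem⟩ := ha f Complex.I hfmem hfI
  obtain ⟨hfd, hfint, cf, hcf0, hcf⟩ := hfmem
  obtain ⟨hgd, hgint, cg, hcg0, hcg⟩ := hgmem
  have hfI' : (0:ℝ) < ‖f Complex.I‖ := norm_pos_iff.2 hfI
  -- the basic identity
  have key : ∀ z : ℂ, f Complex.I * h z = f z * h Complex.I - (z - Complex.I) * g z := by
    intro z
    refine aux_ext (continuous_const.mul hh.continuous)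
      ((hfd.continuous.mul continuous_const).sub
        ((continuous_id.sub continuous_const).mul hgd.continuous)) Complex.I
      (fun y hy => ?_) z
    have hyI : y - Complex.I ≠ 0 := sub_ne_zero.2 hy
    show f Complex.I * h y = f y * h Complex.I - (y - Complex.I) * g y
    rw [hgeq y hy]
    field_simp
    ring
  -- conjugated identity
  have keysharp : ∀ z : ℂ, (starRingEnd ℂ) (f Complex.I) * fsharp h z
      = fsharp f z * (starRingEnd ℂ) (h Complex.I) - (z + Complex.I) * fsharp g z := by
    intro z
    have h1 := congrArg (starRingEnd ℂ) (key ((starRingEnd ℂ) z))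
    rw [map_mul, map_sub, map_mul, map_mul, map_sub, Complex.conj_conj, Complex.conj_I] at h1
    have e2 : (starRingEnd ℂ) (f ((starRingEnd ℂ) z)) = fsharp f z := rfl
    have e3 : (starRingEnd ℂ) (h ((starRingEnd ℂ) z)) = fsharp h z := rfl
    have e4 : (starRingEnd ℂ) (g ((starRingEnd ℂ) z)) = fsharp g z := rfl
    rw [e2, e3, e4] at h1
    rw [h1]
    ring_nf
  -- real axis: |z-I| = |z+I|
  have hnorm_real : ∀ x : ℝ, ‖(x:ℂ) - Complex.I‖ = ‖(x:ℂ) + Complex.I‖ := by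
    intro x
    rw [Complex.norm_def, Complex.norm_def]
    congr 1
    simp [Complex.normSq_apply]
  -- pointwise real bound
  have hbRx : ∀ x : ℝ, ‖h (x:ℂ) / (((x:ℂ) + Complex.I) * e (x:ℂ))‖
      ≤ (‖h Complex.I‖/‖f Complex.I‖) * ‖f (x:ℂ) / e (x:ℂ)‖
        + (1/‖f Complex.I‖) * ‖g (x:ℂ) / e (x:ℂ)‖ := by
    intro x
    rcases eq_or_ne (e (x:ℂ)) 0 with h0 | h0
    · rw [h0, mul_zero, div_zero]
      simp only [norm_zero]
      positivity
    · have hne : (0:ℝ) < ‖e (x:ℂ)‖ := norm_pos_iff.2 h0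
      have hxI : (1:ℝ) ≤ ‖(x:ℂ) + Complex.I‖ := aux_one_le_norm_add_I (by simp)
      have hxI0 : ((x:ℂ) + Complex.I) ≠ 0 := by
        intro hc; rw [hc, norm_zero] at hxI; linarith
      have heq : h (x:ℂ) / (((x:ℂ) + Complex.I) * e (x:ℂ))
          = (f (x:ℂ) * h Complex.I - ((x:ℂ) - Complex.I) * g (x:ℂ))
            / (f Complex.I * (((x:ℂ) + Complex.I) * e (x:ℂ))) := by
        rw [← key x, mul_div_mul_left _ _ hfI]
      rw [heq, norm_div, norm_mul, norm_mul]
      have hnum : ‖f (x:ℂ) * h Complex.I - ((x:ℂ) - Complex.I) * g (x:ℂ)‖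
          ≤ ‖f (x:ℂ)‖ * ‖h Complex.I‖ + ‖(x:ℂ) + Complex.I‖ * ‖g (x:ℂ)‖ := by
        calc ‖f (x:ℂ) * h Complex.I - ((x:ℂ) - Complex.I) * g (x:ℂ)‖
            ≤ ‖f (x:ℂ) * h Complex.I‖ + ‖((x:ℂ) - Complex.I) * g (x:ℂ)‖ := norm_sub_le _ _
          _ = ‖f (x:ℂ)‖ * ‖h Complex.I‖ + ‖(x:ℂ) + Complex.I‖ * ‖g (x:ℂ)‖ := by
              rw [norm_mul, norm_mul, hnorm_real]
      rw [norm_div, norm_div, div_le_iff₀ (by positivity)]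
      have hRHS : (‖h Complex.I‖ / ‖f Complex.I‖ * (‖f (x:ℂ)‖/‖e (x:ℂ)‖)
            + 1/‖f Complex.I‖ * (‖g (x:ℂ)‖/‖e (x:ℂ)‖))
            * (‖f Complex.I‖*(‖(x:ℂ)+Complex.I‖*‖e (x:ℂ)‖))
          = ‖h Complex.I‖*‖f (x:ℂ)‖*‖(x:ℂ)+Complex.I‖ + ‖g (x:ℂ)‖*‖(x:ℂ)+Complex.I‖ := by
        have hb1 : ‖f Complex.I‖ ≠ 0 := ne_of_gt hfI'
        have hb2 : ‖e (x:ℂ)‖ ≠ 0 := ne_of_gt hne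
        have hb1' : ‖f Complex.I‖ ≠ 0 := hb1
        have hb2' : ‖e (x:ℂ)‖ ≠ 0 := hb2
        field_simp [hb1', hb2']
      rw [hRHS]
      nlinarith [hnum, mul_nonneg (norm_nonneg (h Complex.I)) (norm_nonneg (f (x:ℂ))),
        norm_nonneg (g (x:ℂ)), norm_nonneg (f (x:ℂ)), norm_nonneg (h Complex.I), hxI]
  -- integrability
  have hint : Integrable (fun x : ℝ =>
      ‖h (x:ℂ) / (((x:ℂ) + Complex.I) * e (x:ℂ))‖ ^ 2) := by
    apply Integrable.mono'
      ((hfint.const_mul (2*(‖h Complex.I‖/‖f Complex.I‖)^2)).add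
        (hgint.const_mul (2*(1/‖f Complex.I‖)^2)))
      (aux_aesm hh.continuous
        ((continuous_id.add continuous_const).mul he.1.continuous))
    refine Filter.Eventually.of_forall (fun x => ?_)
    rw [Real.norm_of_nonneg (by positivity)]
    have hb := hbRx x
    have h1 : (0:ℝ) ≤ (‖h Complex.I‖/‖f Complex.I‖) * ‖f (x:ℂ) / e (x:ℂ)‖ := by
      positivity
    have h2 : (0:ℝ) ≤ (1/‖f Complex.I‖) * ‖g (x:ℂ) / e (x:ℂ)‖ := by positivity
    have h3 : ‖h (x:ℂ) / (((x:ℂ) + Complex.I) * e (x:ℂ))‖ ^ 2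
        ≤ ((‖h Complex.I‖/‖f Complex.I‖) * ‖f (x:ℂ) / e (x:ℂ)‖
          + (1/‖f Complex.I‖) * ‖g (x:ℂ) / e (x:ℂ)‖)^2 :=
      pow_le_pow_left₀ (norm_nonneg _) hb 2
    have h4 : ((‖h Complex.I‖/‖f Complex.I‖) * ‖f (x:ℂ) / e (x:ℂ)‖
          + (1/‖f Complex.I‖) * ‖g (x:ℂ) / e (x:ℂ)‖)^2
        ≤ 2*((‖h Complex.I‖/‖f Complex.I‖) * ‖f (x:ℂ) / e (x:ℂ)‖)^2
          + 2*((1/‖f Complex.I‖) * ‖g (x:ℂ) / e (x:ℂ)‖)^2 := by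
      nlinarith [sq_nonneg ((‖h Complex.I‖/‖f Complex.I‖) * ‖f (x:ℂ) / e (x:ℂ)‖
        - (1/‖f Complex.I‖) * ‖g (x:ℂ) / e (x:ℂ)‖)]
    calc ‖h (x:ℂ) / (((x:ℂ) + Complex.I) * e (x:ℂ))‖ ^ 2
        ≤ 2*((‖h Complex.I‖/‖f Complex.I‖) * ‖f (x:ℂ) / e (x:ℂ)‖)^2
          + 2*((1/‖f Complex.I‖) * ‖g (x:ℂ) / e (x:ℂ)‖)^2 := h3.trans h4
      _ = 2*(‖h Complex.I‖/‖f Complex.I‖)^2 * ‖f (x:ℂ) / e (x:ℂ)‖^2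
          + 2*(1/‖f Complex.I‖)^2 * ‖g (x:ℂ) / e (x:ℂ)‖^2 := by ring
  -- half plane bounds
  set c := (‖h Complex.I‖ * cf + 3 * cg)/‖f Complex.I‖ with hc
  have hc0 : 0 ≤ c := by positivity
  have hbU : ∀ z : ℂ, 0 < z.im →
      ‖h z / ((z + Complex.I) * e z)‖ ≤ c / Real.sqrt z.im := by
    intro z hz
    have hez : (0:ℝ) < ‖e z‖ := aux_hb_pos he hz
    have hs : (0:ℝ) < Real.sqrt z.im := Real.sqrt_pos.2 hz
    have hzI : (1:ℝ) ≤ ‖z + Complex.I‖ := aux_one_le_norm_add_I hz.le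
    have hzmI : ‖z - Complex.I‖ ≤ 3 * ‖z + Complex.I‖ := by
      have h1 : ‖z - Complex.I‖ ≤ ‖z + Complex.I‖ + ‖(2:ℂ)*Complex.I‖ := by
        have : z - Complex.I = (z + Complex.I) - (2:ℂ)*Complex.I := by ring
        rw [this]
        exact norm_sub_le _ _
      have h2 : ‖(2:ℂ)*Complex.I‖ = 2 := by
        simp
      linarith
    have hfb : ‖f z‖ * Real.sqrt z.im ≤ cf * ‖e z‖ := by
      have h1 := (hcf z hz).1
      rw [norm_div, div_le_div_iff₀ hez hs] at h1
      linarith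
    have hgb : ‖g z‖ * Real.sqrt z.im ≤ cg * ‖e z‖ := by
      have h1 := (hcg z hz).1
      rw [norm_div, div_le_div_iff₀ hez hs] at h1
      linarith
    have heq : h z / ((z + Complex.I) * e z)
        = (f z * h Complex.I - (z - Complex.I) * g z)
          / (f Complex.I * ((z + Complex.I) * e z)) := by
      rw [← key z, mul_div_mul_left _ _ hfI]
    rw [heq, norm_div, norm_mul, norm_mul, hc, div_div]
    rw [div_le_div_iff₀ (by positivity) (by positivity)]
    have hnum : ‖f z * h Complex.I - (z - Complex.I) * g z‖
        ≤ ‖f z‖ * ‖h Complex.I‖ + 3*‖z + Complex.I‖ * ‖g z‖ := by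
      calc ‖f z * h Complex.I - (z - Complex.I) * g z‖
          ≤ ‖f z * h Complex.I‖ + ‖(z - Complex.I) * g z‖ := norm_sub_le _ _
        _ = ‖f z‖ * ‖h Complex.I‖ + ‖z - Complex.I‖ * ‖g z‖ := by rw [norm_mul, norm_mul]
        _ ≤ ‖f z‖ * ‖h Complex.I‖ + 3*‖z + Complex.I‖ * ‖g z‖ := by
            nlinarith [norm_nonneg (g z)]
    calc ‖f z * h Complex.I - (z - Complex.I) * g z‖ * (‖f Complex.I‖ * Real.sqrt z.im)
        ≤ (‖f z‖ * ‖h Complex.I‖ + 3*‖z + Complex.I‖ * ‖g z‖)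
            * (‖f Complex.I‖ * Real.sqrt z.im) := by
          apply mul_le_mul_of_nonneg_right hnum (by positivity)
      _ = ‖f Complex.I‖ * (‖h Complex.I‖ * (‖f z‖ * Real.sqrt z.im)
            + 3*‖z + Complex.I‖ * (‖g z‖ * Real.sqrt z.im)) := by ring
      _ ≤ ‖f Complex.I‖ * (‖h Complex.I‖ * (cf * ‖e z‖)
            + 3*‖z + Complex.I‖ * (cg * ‖e z‖)) := by
          apply mul_le_mul_of_nonneg_left ?_ (norm_nonneg _)
          have h5 : (0:ℝ) ≤ ‖h Complex.I‖ := norm_nonneg _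
          have h6 : (0:ℝ) ≤ 3*‖z + Complex.I‖ := by positivity
          nlinarith
      _ ≤ (‖h Complex.I‖ * cf + 3 * cg) * (‖f Complex.I‖ * (‖z + Complex.I‖ * ‖e z‖)) := by
          have h7 : (0:ℝ) ≤ ‖h Complex.I‖ * cf * ‖e z‖ := by positivity
          have h8 : (0:ℝ) ≤ ‖f Complex.I‖ := norm_nonneg _
          nlinarith [mul_nonneg h8 (mul_nonneg h7 (by linarith : (0:ℝ) ≤ ‖z + Complex.I‖ - 1))]
  have hbUs : ∀ z : ℂ, 0 < z.im →
      ‖fsharp h z / ((z + Complex.I) * e z)‖ ≤ c / Real.sqrt z.im := by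
    intro z hz
    have hez : (0:ℝ) < ‖e z‖ := aux_hb_pos he hz
    have hs : (0:ℝ) < Real.sqrt z.im := Real.sqrt_pos.2 hz
    have hzI : (1:ℝ) ≤ ‖z + Complex.I‖ := aux_one_le_norm_add_I hz.le
    have hfb : ‖fsharp f z‖ * Real.sqrt z.im ≤ cf * ‖e z‖ := by
      have h1 := (hcf z hz).2
      rw [norm_div, div_le_div_iff₀ hez hs] at h1
      linarith
    have hgb : ‖fsharp g z‖ * Real.sqrt z.im ≤ cg * ‖e z‖ := by
      have h1 := (hcg z hz).2
      rw [norm_div, div_le_div_iff₀ hez hs] at h1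
      linarith
    have hfIc : (starRingEnd ℂ) (f Complex.I) ≠ 0 := by
      simpa using hfI
    have hfIc' : ‖(starRingEnd ℂ) (f Complex.I)‖ = ‖f Complex.I‖ := by
      simp
    have heq : fsharp h z / ((z + Complex.I) * e z)
        = (fsharp f z * (starRingEnd ℂ) (h Complex.I) - (z + Complex.I) * fsharp g z)
          / ((starRingEnd ℂ) (f Complex.I) * ((z + Complex.I) * e z)) := by
      rw [← keysharp z, mul_div_mul_left _ _ hfIc]
    rw [heq, norm_div, norm_mul, norm_mul, hfIc', hc, div_div]
    rw [div_le_div_iff₀ (by positivity) (by positivity)]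
    have hnum : ‖fsharp f z * (starRingEnd ℂ) (h Complex.I) - (z + Complex.I) * fsharp g z‖
        ≤ ‖fsharp f z‖ * ‖h Complex.I‖ + ‖z + Complex.I‖ * ‖fsharp g z‖ := by
      calc ‖fsharp f z * (starRingEnd ℂ) (h Complex.I) - (z + Complex.I) * fsharp g z‖
          ≤ ‖fsharp f z * (starRingEnd ℂ) (h Complex.I)‖
            + ‖(z + Complex.I) * fsharp g z‖ := norm_sub_le _ _
        _ = ‖fsharp f z‖ * ‖h Complex.I‖ + ‖z + Complex.I‖ * ‖fsharp g z‖ := by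
            rw [norm_mul, norm_mul]
            congr 2
            simp
    calc ‖fsharp f z * (starRingEnd ℂ) (h Complex.I) - (z + Complex.I) * fsharp g z‖
          * (‖f Complex.I‖ * Real.sqrt z.im)
        ≤ (‖fsharp f z‖ * ‖h Complex.I‖ + ‖z + Complex.I‖ * ‖fsharp g z‖)
            * (‖f Complex.I‖ * Real.sqrt z.im) := by
          apply mul_le_mul_of_nonneg_right hnum (by positivity)
      _ = ‖f Complex.I‖ * (‖h Complex.I‖ * (‖fsharp f z‖ * Real.sqrt z.im)
            + ‖z + Complex.I‖ * (‖fsharp g z‖ * Real.sqrt z.im)) := by ring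
      _ ≤ ‖f Complex.I‖ * (‖h Complex.I‖ * (cf * ‖e z‖)
            + ‖z + Complex.I‖ * (cg * ‖e z‖)) := by
          apply mul_le_mul_of_nonneg_left ?_ (norm_nonneg _)
          have h5 : (0:ℝ) ≤ ‖h Complex.I‖ := norm_nonneg _
          have h6 : (0:ℝ) ≤ ‖z + Complex.I‖ := norm_nonneg _
          nlinarith
      _ ≤ (‖h Complex.I‖ * cf + 3 * cg) * (‖f Complex.I‖ * (‖z + Complex.I‖ * ‖e z‖)) := by
          have h7 : (0:ℝ) ≤ ‖h Complex.I‖ * cf * ‖e z‖ := by positivity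
          have h8 : (0:ℝ) ≤ ‖f Complex.I‖ := norm_nonneg _
          have h9 : (0:ℝ) ≤ cg * ‖e z‖ := by positivity
          nlinarith [mul_nonneg h8 (mul_nonneg h7 (by linarith : (0:ℝ) ≤ ‖z + Complex.I‖ - 1)),
            mul_nonneg h8 (mul_nonneg h9 (by linarith : (0:ℝ) ≤ 3 - 1))]
  exact ⟨hh, hint, c, hc0, fun z hz => ⟨hbU z hz, hbUs z hz⟩⟩

end Forward

lemma aux_alg (a b c d E N D dl Wc : ℝ) (hd : dl ≠ 0) (hE : E ≠ 0) (hN : N ≠ 0) :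
    ((a/dl) * (b/E) + (c*(dl+Wc)/dl) * (d/(N*E))) * (D*E)
      = (a*b)*(D/dl) + (c*d)*((dl+Wc)*D/(dl*N)) := by
  field_simp


set_option maxHeartbeats 1000000 in
lemma aux_backward {e h : ℂ → ℂ} (he : IsHB e) (hh : Differentiable ℂ h)
    (hmem : MemDB (fun z => (z + Complex.I) * e z) h) : AssocCond e h := by
  obtain ⟨hhd, hhint0, ch, hch0, hch0'⟩ := hmem
  have hhint : Integrable (fun x : ℝ =>
      ‖h (x:ℂ) / (((x:ℂ) + Complex.I) * e (x:ℂ))‖ ^ 2) := hhint0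
  have hch : ∀ z : ℂ, 0 < z.im →
      ‖h z / ((z + Complex.I) * e z)‖ ≤ ch / Real.sqrt z.im ∧
      ‖fsharp h z / ((z + Complex.I) * e z)‖ ≤ ch / Real.sqrt z.im := by
    intro z hz
    have := hch0' z hz
    simpa using this
  intro f w hf hfw
  obtain ⟨hfd, hfint, cf, hcf0, hcf⟩ := hf
  -- the function g
  set φ : ℂ → ℂ := fun z => f z * h w - f w * h z with hφ
  have hφd : Differentiable ℂ φ := (hfd.mul_const _).sub (hh.const_mul _)
  have hφw : φ w = 0 := by simp [hφ]
  set g : ℂ → ℂ := dslope φ w with hg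
  have hgd : Differentiable ℂ g := aux_differentiable_dslope hφd w
  have hgeq : ∀ z : ℂ, z ≠ w → g z = (f z * h w - f w * h z) / (z - w) := by
    intro z hz
    rw [hg, dslope_of_ne _ hz, slope_def_field, hφw, sub_zero]
  -- radius and lower bound for f near w
  have hr : (0:ℝ) < ‖f w‖ / 2 := by
    have : (0:ℝ) < ‖f w‖ := norm_pos_iff.2 hfw
    linarith
  set r := ‖f w‖ / 2 with hrdef
  obtain ⟨δ0, hδ0, hδ0p⟩ := Metric.continuousAt_iff.1 (hfd.continuous.continuousAt (x := w)) r hr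
  set δ := δ0 / 2 with hδdef
  have hδ : (0:ℝ) < δ := by positivity
  have hball : ∀ ζ : ℂ, ‖ζ - w‖ ≤ δ → r ≤ ‖f ζ‖ := by
    intro ζ hζ
    have h1 : dist ζ w < δ0 := by
      rw [dist_eq_norm]
      have : δ < δ0 := by rw [hδdef]; linarith
      linarith
    have h2 := hδ0p h1
    rw [dist_eq_norm] at h2
    have h3 := norm_sub_norm_le (f ζ) (f w)
    have h4 : ‖f ζ - f w‖ = ‖f w - f ζ‖ := by rw [norm_sub_rev]
    have h5 := norm_sub_norm_le (f w) (f ζ)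
    rw [← h4] at h5
    rw [hrdef]
    linarith
  -- sup of g on the closed ball
  obtain ⟨M, hM⟩ := (isCompact_closedBall w δ).exists_bound_of_continuousOn
    hgd.continuous.continuousOn
  have hM0 : (0:ℝ) ≤ M :=
    le_trans (norm_nonneg _) (hM w (Metric.mem_closedBall_self hδ.le))
  set W := ‖w‖ + 1 with hW
  have hW0 : (0:ℝ) < W := by positivity
  have hwI : ‖w + Complex.I‖ ≤ W := by
    rw [hW]
    calc ‖w + Complex.I‖ ≤ ‖w‖ + ‖Complex.I‖ := norm_add_le _ _
      _ = ‖w‖ + 1 := by simp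
  have hwcI : ‖(starRingEnd ℂ) w + Complex.I‖ ≤ W := by
    rw [hW]
    calc ‖(starRingEnd ℂ) w + Complex.I‖ ≤ ‖(starRingEnd ℂ) w‖ + ‖Complex.I‖ := norm_add_le _ _
      _ = ‖w‖ + 1 := by simp
  -- CLAIM A : generic off-ball bound
  have claimA : ∀ z : ℂ, e z ≠ 0 → z + Complex.I ≠ 0 → δ ≤ ‖z - w‖ →
      ‖g z / e z‖ ≤ (‖h w‖/δ) * ‖f z / e z‖
        + (‖f w‖*(δ+W)/δ) * ‖h z / ((z + Complex.I) * e z)‖ := by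
    intro z hez hzI hdz
    have hE : (0:ℝ) < ‖e z‖ := norm_pos_iff.2 hez
    have hN : (0:ℝ) < ‖z + Complex.I‖ := norm_pos_iff.2 hzI
    have hd : (0:ℝ) < ‖z - w‖ := lt_of_lt_of_le hδ hdz
    have hzw : z ≠ w := by
      intro hc; rw [hc, sub_self, norm_zero] at hd; linarith
    have hNle : ‖z + Complex.I‖ ≤ ‖z - w‖ + W := by
      calc ‖z + Complex.I‖ = ‖(z - w) + (w + Complex.I)‖ := by congr 1; ring
        _ ≤ ‖z - w‖ + ‖w + Complex.I‖ := norm_add_le _ _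
        _ ≤ ‖z - w‖ + W := by linarith
    rw [hgeq z hzw, div_div, norm_div, norm_mul]
    rw [div_le_iff₀ (by positivity)]
    have hfxe : ‖f z / e z‖ = ‖f z‖/‖e z‖ := norm_div _ _
    have hhxe : ‖h z / ((z + Complex.I) * e z)‖ = ‖h z‖/(‖z + Complex.I‖*‖e z‖) := by
      rw [norm_div, norm_mul]
    rw [hfxe, hhxe]
    have hexp : ((‖h w‖/δ) * (‖f z‖/‖e z‖)
          + (‖f w‖*(δ+W)/δ) * (‖h z‖/(‖z + Complex.I‖*‖e z‖))) * (‖z - w‖*‖e z‖)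
        = (‖h w‖*‖f z‖)*(‖z - w‖/δ)
          + (‖f w‖*‖h z‖)*((δ+W)*‖z - w‖/(δ*‖z + Complex.I‖)) :=
      aux_alg _ _ _ _ _ _ _ _ _ (ne_of_gt hδ) (ne_of_gt hE) (ne_of_gt hN)
    rw [hexp]
    have hc1 : (1:ℝ) ≤ ‖z - w‖/δ := by
      rw [le_div_iff₀ hδ]; linarith
    have hc2 : (1:ℝ) ≤ (δ+W)*‖z - w‖/(δ*‖z + Complex.I‖) := by
      rw [le_div_iff₀ (by positivity)]
      nlinarith
    have hnum : ‖f z * h w - f w * h z‖ ≤ ‖f z‖*‖h w‖ + ‖f w‖*‖h z‖ := by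
      calc ‖f z * h w - f w * h z‖ ≤ ‖f z * h w‖ + ‖f w * h z‖ := norm_sub_le _ _
        _ = ‖f z‖*‖h w‖ + ‖f w‖*‖h z‖ := by rw [norm_mul, norm_mul]
    nlinarith [mul_nonneg (mul_nonneg (norm_nonneg (h w)) (norm_nonneg (f z)))
        (by linarith : (0:ℝ) ≤ ‖z - w‖/δ - 1),
      mul_nonneg (mul_nonneg (norm_nonneg (f w)) (norm_nonneg (h z)))
        (by linarith : (0:ℝ) ≤ (δ+W)*‖z - w‖/(δ*‖z + Complex.I‖) - 1)]
  -- CLAIM A sharp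
  have hgs_eq : ∀ z : ℂ, z ≠ (starRingEnd ℂ) w →
      fsharp g z = (fsharp f z * (starRingEnd ℂ) (h w)
        - (starRingEnd ℂ) (f w) * fsharp h z) / (z - (starRingEnd ℂ) w) := by
    intro z hz
    have hcz : (starRingEnd ℂ) z ≠ w := by
      intro hc
      apply hz
      have := congrArg (starRingEnd ℂ) hc
      rwa [Complex.conj_conj] at this
    have h0 : fsharp g z = (starRingEnd ℂ) (g ((starRingEnd ℂ) z)) := rfl
    rw [h0, hgeq _ hcz, map_div₀, map_sub, map_mul, map_mul, map_sub, Complex.conj_conj]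
    rfl
  have claimAs : ∀ z : ℂ, e z ≠ 0 → z + Complex.I ≠ 0 → δ ≤ ‖z - (starRingEnd ℂ) w‖ →
      ‖fsharp g z / e z‖ ≤ (‖h w‖/δ) * ‖fsharp f z / e z‖
        + (‖f w‖*(δ+W)/δ) * ‖fsharp h z / ((z + Complex.I) * e z)‖ := by
    intro z hez hzI hdz
    have hE : (0:ℝ) < ‖e z‖ := norm_pos_iff.2 hez
    have hN : (0:ℝ) < ‖z + Complex.I‖ := norm_pos_iff.2 hzI
    have hd : (0:ℝ) < ‖z - (starRingEnd ℂ) w‖ := lt_of_lt_of_le hδ hdz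
    have hzw : z ≠ (starRingEnd ℂ) w := by
      intro hc; rw [hc, sub_self, norm_zero] at hd; linarith
    have hNle : ‖z + Complex.I‖ ≤ ‖z - (starRingEnd ℂ) w‖ + W := by
      calc ‖z + Complex.I‖
          = ‖(z - (starRingEnd ℂ) w) + ((starRingEnd ℂ) w + Complex.I)‖ := by
            congr 1; ring
        _ ≤ ‖z - (starRingEnd ℂ) w‖ + ‖(starRingEnd ℂ) w + Complex.I‖ := norm_add_le _ _
        _ ≤ ‖z - (starRingEnd ℂ) w‖ + W := by linarith
    rw [hgs_eq z hzw, div_div, norm_div, norm_mul]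
    rw [div_le_iff₀ (by positivity)]
    have hfxe : ‖fsharp f z / e z‖ = ‖fsharp f z‖/‖e z‖ := norm_div _ _
    have hhxe : ‖fsharp h z / ((z + Complex.I) * e z)‖
        = ‖fsharp h z‖/(‖z + Complex.I‖*‖e z‖) := by
      rw [norm_div, norm_mul]
    rw [hfxe, hhxe]
    have hexp : ((‖h w‖/δ) * (‖fsharp f z‖/‖e z‖)
          + (‖f w‖*(δ+W)/δ) * (‖fsharp h z‖/(‖z + Complex.I‖*‖e z‖)))
            * (‖z - (starRingEnd ℂ) w‖*‖e z‖)
        = (‖h w‖*‖fsharp f z‖)*(‖z - (starRingEnd ℂ) w‖/δ)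
          + (‖f w‖*‖fsharp h z‖)
            *((δ+W)*‖z - (starRingEnd ℂ) w‖/(δ*‖z + Complex.I‖)) :=
      aux_alg _ _ _ _ _ _ _ _ _ (ne_of_gt hδ) (ne_of_gt hE) (ne_of_gt hN)
    rw [hexp]
    have hc1 : (1:ℝ) ≤ ‖z - (starRingEnd ℂ) w‖/δ := by
      rw [le_div_iff₀ hδ]; linarith
    have hc2 : (1:ℝ) ≤ (δ+W)*‖z - (starRingEnd ℂ) w‖/(δ*‖z + Complex.I‖) := by
      rw [le_div_iff₀ (by positivity)]
      nlinarith
    have hnum : ‖fsharp f z * (starRingEnd ℂ) (h w) - (starRingEnd ℂ) (f w) * fsharp h z‖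
        ≤ ‖fsharp f z‖*‖h w‖ + ‖f w‖*‖fsharp h z‖ := by
      calc ‖fsharp f z * (starRingEnd ℂ) (h w) - (starRingEnd ℂ) (f w) * fsharp h z‖
          ≤ ‖fsharp f z * (starRingEnd ℂ) (h w)‖
            + ‖(starRingEnd ℂ) (f w) * fsharp h z‖ := norm_sub_le _ _
        _ = ‖fsharp f z‖*‖h w‖ + ‖f w‖*‖fsharp h z‖ := by
            rw [norm_mul, norm_mul]
            simp
    nlinarith [mul_nonneg (mul_nonneg (norm_nonneg (h w)) (norm_nonneg (fsharp f z)))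
        (by linarith : (0:ℝ) ≤ ‖z - (starRingEnd ℂ) w‖/δ - 1),
      mul_nonneg (mul_nonneg (norm_nonneg (f w)) (norm_nonneg (fsharp h z)))
        (by linarith : (0:ℝ) ≤ (δ+W)*‖z - (starRingEnd ℂ) w‖/(δ*‖z + Complex.I‖) - 1)]
  -- ball bound
  have claimB : ∀ z : ℂ, e z ≠ 0 → ‖g z‖ ≤ M → r ≤ ‖f z‖ →
      ‖g z / e z‖ ≤ (M/r) * ‖f z / e z‖ := by
    intro z hez hgz hfz
    have h1 : ‖g z‖ ≤ M * ‖f z‖ / r := by rw [le_div_iff₀ hr]; nlinarith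
    rw [norm_div, norm_div]
    calc ‖g z‖ / ‖e z‖ ≤ (M * ‖f z‖ / r) / ‖e z‖ :=
          div_le_div_of_nonneg_right h1 (norm_nonneg _)
      _ = (M/r) * (‖f z‖ / ‖e z‖) := by ring
  refine ⟨g, hgeq, hgd, ?_, ?_⟩
  · -- integrability
    set Acst := 2*(‖h w‖/δ)^2 + (M/r)^2 with hA
    set Bcst := 2*(‖f w‖*(δ+W)/δ)^2 with hB
    have hA0 : (0:ℝ) ≤ Acst := by rw [hA]; positivity
    have hB0 : (0:ℝ) ≤ Bcst := by rw [hB]; positivity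
    apply Integrable.mono'
      ((hfint.const_mul Acst).add (hhint.const_mul Bcst))
      (aux_aesm hgd.continuous he.1.continuous)
    refine Filter.Eventually.of_forall (fun x => ?_)
    rw [Real.norm_of_nonneg (by positivity)]
    rcases eq_or_ne (e (x:ℂ)) 0 with h0 | h0
    · rw [h0, div_zero]
      simp only [norm_zero]
      rw [zero_pow (by norm_num)]
      exact add_nonneg (mul_nonneg hA0 (by positivity)) (mul_nonneg hB0 (by positivity))
    · have hxI : (1:ℝ) ≤ ‖(x:ℂ) + Complex.I‖ := aux_one_le_norm_add_I (by simp)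
      have hxI0 : ((x:ℂ) + Complex.I) ≠ 0 := by
        intro hc; rw [hc, norm_zero] at hxI; linarith
      rcases le_or_gt δ ‖(x:ℂ) - w‖ with hcase | hcase
      · have hcl := claimA (x:ℂ) h0 hxI0 hcase
        calc ‖g (x:ℂ) / e (x:ℂ)‖^2
            ≤ ((‖h w‖/δ) * ‖f (x:ℂ) / e (x:ℂ)‖
              + (‖f w‖*(δ+W)/δ) * ‖h (x:ℂ) / (((x:ℂ) + Complex.I) * e (x:ℂ))‖)^2 := by
              apply pow_le_pow_left₀ (norm_nonneg _) hcl
          _ ≤ Acst * ‖f (x:ℂ) / e (x:ℂ)‖^2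
              + Bcst * ‖h (x:ℂ) / (((x:ℂ) + Complex.I) * e (x:ℂ))‖^2 := by
              rw [hA, hB]
              nlinarith [sq_nonneg ((‖h w‖/δ) * ‖f (x:ℂ) / e (x:ℂ)‖
                  - (‖f w‖*(δ+W)/δ) * ‖h (x:ℂ) / (((x:ℂ) + Complex.I) * e (x:ℂ))‖),
                sq_nonneg (‖f (x:ℂ) / e (x:ℂ)‖), norm_nonneg (f (x:ℂ) / e (x:ℂ)),
                sq_nonneg (M/r * ‖f (x:ℂ) / e (x:ℂ)‖)]
      · have hin : (x:ℂ) ∈ Metric.closedBall w δ := by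
          rw [Metric.mem_closedBall, dist_eq_norm]; linarith
        have hcl := claimB (x:ℂ) h0 (hM _ hin) (hball _ hcase.le)
        calc ‖g (x:ℂ) / e (x:ℂ)‖^2 ≤ ((M/r) * ‖f (x:ℂ) / e (x:ℂ)‖)^2 := by
              apply pow_le_pow_left₀ (norm_nonneg _) hcl
          _ = (M/r)^2 * ‖f (x:ℂ) / e (x:ℂ)‖^2 := by ring
          _ ≤ Acst * ‖f (x:ℂ) / e (x:ℂ)‖^2
              + Bcst * ‖h (x:ℂ) / (((x:ℂ) + Complex.I) * e (x:ℂ))‖^2 := by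
              rw [hA, hB]
              have h1 : (0:ℝ) ≤ ‖f (x:ℂ) / e (x:ℂ)‖^2 := by positivity
              have h2 : (0:ℝ) ≤ ‖h (x:ℂ) / (((x:ℂ) + Complex.I) * e (x:ℂ))‖^2 := by
                positivity
              nlinarith [sq_nonneg (‖h w‖/δ)]
  · -- half-plane bounds
    refine ⟨(‖h w‖/δ)*cf + (‖f w‖*(δ+W)/δ)*ch + (M/r)*cf, by positivity, fun z hz => ?_⟩
    have hez : e z ≠ 0 := by
      have := aux_hb_pos he hz
      exact norm_pos_iff.1 this
    have hzI : (1:ℝ) ≤ ‖z + Complex.I‖ := aux_one_le_norm_add_I hz.le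
    have hzI0 : z + Complex.I ≠ 0 := by
      intro hc; rw [hc, norm_zero] at hzI; linarith
    have hs : (0:ℝ) < Real.sqrt z.im := Real.sqrt_pos.2 hz
    have hcfz := hcf z hz
    have hchz := hch z hz
    have hcf1 : ‖f z / e z‖ ≤ cf / Real.sqrt z.im := by
      exact hcfz.1
    have hcf2 : ‖fsharp f z / e z‖ ≤ cf / Real.sqrt z.im := by
      exact hcfz.2
    constructor
    · rcases le_or_gt δ ‖z - w‖ with hcase | hcase
      · have hcl := claimA z hez hzI0 hcase
        refine hcl.trans ?_
        have hh1 : (‖h w‖/δ) * ‖f z / e z‖ ≤ (‖h w‖/δ) * (cf / Real.sqrt z.im) :=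
          mul_le_mul_of_nonneg_left hcf1 (by positivity)
        have hh2 : (‖f w‖*(δ+W)/δ) * ‖h z / ((z + Complex.I) * e z)‖
            ≤ (‖f w‖*(δ+W)/δ) * (ch / Real.sqrt z.im) :=
          mul_le_mul_of_nonneg_left hchz.1 (by positivity)
        have hh3 : (0:ℝ) ≤ (M/r)*cf / Real.sqrt z.im := by positivity
        calc (‖h w‖/δ) * ‖f z / e z‖
              + (‖f w‖*(δ+W)/δ) * ‖h z / ((z + Complex.I) * e z)‖
            ≤ (‖h w‖/δ) * (cf / Real.sqrt z.im)
              + (‖f w‖*(δ+W)/δ) * (ch / Real.sqrt z.im) := by linarith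
          _ = ((‖h w‖/δ)*cf + (‖f w‖*(δ+W)/δ)*ch) / Real.sqrt z.im := by ring
          _ ≤ ((‖h w‖/δ)*cf + (‖f w‖*(δ+W)/δ)*ch + (M/r)*cf) / Real.sqrt z.im := by
              apply div_le_div_of_nonneg_right ?_ (Real.sqrt_nonneg _)
              have hnn : (0:ℝ) ≤ (M/r)*cf := by positivity
              linarith
      · have hin : z ∈ Metric.closedBall w δ := by
          rw [Metric.mem_closedBall, dist_eq_norm]; linarith
        have hcl := claimB z hez (hM _ hin) (hball _ hcase.le)
        refine hcl.trans ?_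
        have hh1 : (M/r) * ‖f z / e z‖ ≤ (M/r) * (cf / Real.sqrt z.im) :=
          mul_le_mul_of_nonneg_left hcf1 (by positivity)
        calc (M/r) * ‖f z / e z‖ ≤ (M/r) * (cf / Real.sqrt z.im) := hh1
          _ = ((M/r)*cf) / Real.sqrt z.im := by ring
          _ ≤ ((‖h w‖/δ)*cf + (‖f w‖*(δ+W)/δ)*ch + (M/r)*cf) / Real.sqrt z.im := by
              apply div_le_div_of_nonneg_right ?_ (Real.sqrt_nonneg _)
              have h1 : (0:ℝ) ≤ (‖h w‖/δ)*cf := by positivity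
              have h2 : (0:ℝ) ≤ (‖f w‖*(δ+W)/δ)*ch := by positivity
              linarith
    · rcases le_or_gt δ ‖z - (starRingEnd ℂ) w‖ with hcase | hcase
      · have hcl := claimAs z hez hzI0 hcase
        refine hcl.trans ?_
        have hh1 : (‖h w‖/δ) * ‖fsharp f z / e z‖ ≤ (‖h w‖/δ) * (cf / Real.sqrt z.im) :=
          mul_le_mul_of_nonneg_left hcf2 (by positivity)
        have hh2 : (‖f w‖*(δ+W)/δ) * ‖fsharp h z / ((z + Complex.I) * e z)‖
            ≤ (‖f w‖*(δ+W)/δ) * (ch / Real.sqrt z.im) :=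
          mul_le_mul_of_nonneg_left hchz.2 (by positivity)
        have hh3 : (0:ℝ) ≤ (M/r)*cf / Real.sqrt z.im := by positivity
        calc (‖h w‖/δ) * ‖fsharp f z / e z‖
              + (‖f w‖*(δ+W)/δ) * ‖fsharp h z / ((z + Complex.I) * e z)‖
            ≤ (‖h w‖/δ) * (cf / Real.sqrt z.im)
              + (‖f w‖*(δ+W)/δ) * (ch / Real.sqrt z.im) := by linarith
          _ = ((‖h w‖/δ)*cf + (‖f w‖*(δ+W)/δ)*ch) / Real.sqrt z.im := by ring
          _ ≤ ((‖h w‖/δ)*cf + (‖f w‖*(δ+W)/δ)*ch + (M/r)*cf) / Real.sqrt z.im := by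
              apply div_le_div_of_nonneg_right ?_ (Real.sqrt_nonneg _)
              have hnn : (0:ℝ) ≤ (M/r)*cf := by positivity
              linarith
      · -- conj z in the ball
        have hconj_in : (starRingEnd ℂ) z ∈ Metric.closedBall w δ := by
          rw [Metric.mem_closedBall, dist_eq_norm]
          have : ‖(starRingEnd ℂ) z - w‖ = ‖z - (starRingEnd ℂ) w‖ := by
            rw [show (starRingEnd ℂ) z - w = (starRingEnd ℂ) (z - (starRingEnd ℂ) w) by
              rw [map_sub, Complex.conj_conj]]
            rw [Complex.norm_conj]
          rw [this]; linarith
        have hgM : ‖fsharp g z‖ ≤ M := by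
          have h1 : ‖fsharp g z‖ = ‖g ((starRingEnd ℂ) z)‖ := by
            rw [show fsharp g z = (starRingEnd ℂ) (g ((starRingEnd ℂ) z)) from rfl]
            rw [Complex.norm_conj]
          rw [h1]
          exact hM _ hconj_in
        have hfr : r ≤ ‖fsharp f z‖ := by
          have h1 : ‖fsharp f z‖ = ‖f ((starRingEnd ℂ) z)‖ := by
            rw [show fsharp f z = (starRingEnd ℂ) (f ((starRingEnd ℂ) z)) from rfl]
            rw [Complex.norm_conj]
          rw [h1]
          apply hball
          rw [show (starRingEnd ℂ) z - w = (starRingEnd ℂ) (z - (starRingEnd ℂ) w) by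
            rw [map_sub, Complex.conj_conj]]
          rw [Complex.norm_conj]
          linarith
        -- mimic claimB for fsharp
        have hE : (0:ℝ) < ‖e z‖ := norm_pos_iff.2 hez
        have hcl : ‖fsharp g z / e z‖ ≤ (M/r) * ‖fsharp f z / e z‖ := by
          have h1 : ‖fsharp g z‖ ≤ M * ‖fsharp f z‖ / r := by
            rw [le_div_iff₀ hr]; nlinarith
          rw [norm_div, norm_div]
          calc ‖fsharp g z‖ / ‖e z‖ ≤ (M * ‖fsharp f z‖ / r) / ‖e z‖ :=
                div_le_div_of_nonneg_right h1 (norm_nonneg _)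
            _ = (M/r) * (‖fsharp f z‖ / ‖e z‖) := by ring
        refine hcl.trans ?_
        calc (M/r) * ‖fsharp f z / e z‖ ≤ (M/r) * (cf / Real.sqrt z.im) :=
              mul_le_mul_of_nonneg_left hcf2 (by positivity)
          _ = ((M/r)*cf) / Real.sqrt z.im := by ring
          _ ≤ ((‖h w‖/δ)*cf + (‖f w‖*(δ+W)/δ)*ch + (M/r)*cf) / Real.sqrt z.im := by
              apply div_le_div_of_nonneg_right ?_ (Real.sqrt_nonneg _)
              have h1 : (0:ℝ) ≤ (‖h w‖/δ)*cf := by positivity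
              have h2 : (0:ℝ) ≤ (‖f w‖*(δ+W)/δ)*ch := by positivity
              linarith


end Main

/-- `(z + i)e(z)` is an HB function, and an entire function `h` is
associated to `B(e)` iff `h ∈ B((z + i)e)`. -/
theorem statement12 (e : ℂ → ℂ) (he : IsHB e) :
    IsHB (fun z => (z + Complex.I) * e z) ∧
    ∀ h : ℂ → ℂ, Differentiable ℂ h →
      (AssocCond e h ↔ MemDB (fun z => (z + Complex.I) * e z) h) := by
  refine ⟨aux_isHB_e1 he, fun h hh => ⟨fun ha => aux_forward he hh ha,
    fun hm => aux_backward he hh hm⟩⟩
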